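/- Let A be an abelian group (written multiplicatively), let v : A → ℤ be a surjective group homomorphism, and let Γ be a group acting on A by group automorphisms (written γ•a) such that v(γ•a) = v(a) for all γ ∈ Γ and a ∈ A. Fix n ≥ 1 and a group homomorphism φ : Γ → GL_n(ℤ), and let integer matrices M act on Aⁿ by the monomial action (M·λ)_i = ∏_j λ_j^{M_{ij}}. Suppose φ is nontrivial, i.e., there exists γ₀ ∈ Γ with φ(γ₀) ≠ 1. Let U = {μ ∈ Aⁿ : v(μ_i) = 0 for all i} and S = {ν ∈ Aⁿ : ν = φ(γ)·(γ•ν) for all γ ∈ Γ}, where γ acts on Aⁿ componentwise. Then there exists λ ∈ Aⁿ which cannot be written as a componentwise product λ = μ·ν with μ ∈ U and ν ∈ S. -/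
import Mathlib


/-- The monomial action of an integer matrix `M` on `Aⁿ`, for `A` a multiplicative
abelian group: `(M · x)_i = ∏_j x_j ^ (M i j)`. -/
def monomialAct {A : Type*} [CommGroup A] {n : ℕ}
    (M : Matrix (Fin n) (Fin n) ℤ) (x : Fin n → A) : Fin n → A :=
  fun i => ∏ j, x j ^ M i j

/-- if `φ : Γ → GL_n(ℤ)` is nontrivial, then there is an element of `Aⁿ`
which is not a product `μ * ν` with `μ` of componentwise valuation zero and `ν` in the
"twisted torus" point set `{ν : ν = φ(γ)·(γ • ν) for all γ}`. -/
theorem exists_not_in_double_quotient {A Γ : Type*} [CommGroup A] [Group Γ]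
    [MulDistribMulAction Γ A]
    (v : A → ℤ) (hv : ∀ a b : A, v (a * b) = v a + v b)
    (hvsurj : Function.Surjective v)
    (hvinv : ∀ (γ : Γ) (a : A), v (γ • a) = v a)
    {n : ℕ} (hn : 1 ≤ n) (φ : Γ →* Matrix.GeneralLinearGroup (Fin n) ℤ)
    (hφ : ∃ γ₀ : Γ, φ γ₀ ≠ 1) :
    ∃ lam : Fin n → A,
      ¬ ∃ μ ν : Fin n → A,
        (∀ i, v (μ i) = 0) ∧
        (∀ γ : Γ, ν = monomialAct (φ γ : Matrix (Fin n) (Fin n) ℤ) (fun i => γ • ν i)) ∧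
        lam = μ * ν := by
  classical
  obtain ⟨γ₀, hγ₀⟩ := hφ
  set M : Matrix (Fin n) (Fin n) ℤ := (φ γ₀ : Matrix (Fin n) (Fin n) ℤ) with hM
  -- v as a monoid hom to Multiplicative ℤ
  let V : A →* Multiplicative ℤ :=
    MonoidHom.mk' (fun a => Multiplicative.ofAdd (v a)) (fun a b => by
      simp [hv a b])
  have hVa : ∀ a : A, Multiplicative.toAdd (V a) = v a := fun a => rfl
  have hMne : M ≠ 1 := by
    intro h
    apply hγ₀
    apply Units.ext
    rw [Units.val_one]
    exact h
  have hex : ∃ i j, M i j ≠ (1 : Matrix (Fin n) (Fin n) ℤ) i j := by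
    by_contra h
    push_neg at h
    exact hMne (by ext i j; exact h i j)
  obtain ⟨i, j, hij⟩ := hex
  set x : Fin n → ℤ := fun k => if k = j then 1 else 0 with hx
  choose lam hlam using fun k => hvsurj (x k)
  refine ⟨lam, ?_⟩
  rintro ⟨μ, ν, hμ, hν, hprod⟩
  have hνv : ∀ k, v (ν k) = x k := by
    intro k
    have h1 : v (lam k) = v (μ k) + v (ν k) := by
      rw [hprod, Pi.mul_apply, hv]
    rw [hlam k, hμ k, zero_add] at h1
    exact h1.symm
  have key := congrArg (fun f => f i) (hν γ₀)
  simp only [monomialAct] at key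
  -- key : ν i = ∏ jj, (γ₀ • ν jj) ^ M i jj
  have h2 : v (ν i) = ∑ jj, M i jj * v (ν jj) := by
    rw [key]
    have : V (∏ jj, (γ₀ • ν jj) ^ M i jj) = ∏ jj, V (γ₀ • ν jj) ^ M i jj := by
      rw [map_prod]
      exact Finset.prod_congr rfl fun jj _ => map_zpow V _ _
    have h3 := congrArg Multiplicative.toAdd this
    rw [hVa] at h3
    rw [h3, toAdd_prod]
    refine Finset.sum_congr rfl fun jj _ => ?_
    rw [toAdd_zpow, hVa, hvinv, smul_eq_mul]
  rw [hνv i] at h2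
  have h4 : ∑ jj, M i jj * v (ν jj) = M i j := by
    rw [Finset.sum_congr rfl fun jj _ => by rw [hνv jj]]
    simp [hx, mul_ite, Finset.sum_ite_eq']
  rw [h4] at h2
  apply hij
  rw [← h2, Matrix.one_apply, hx]
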